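/- Let n ≥ 2 and q₁, …, q_n ≥ 0 with ∑_{i=1}^n e^{−q_i} = 1. Then min_{1≤i≤n} q_i ≤ (n²/2) · ∑_{i≠j} e^{−(q_i + q_j)}. -/

import Mathlib

/-- If `qᵢ ≥ 0` and `∑ e^{-qᵢ} = 1` (`n ≥ 2`), then
`min qᵢ ≤ (n²/2) ∑_{i≠j} e^{-(qᵢ+qⱼ)}`. -/
theorem stmt9 (n : ℕ) (hn : 2 ≤ n) (hne : (Finset.univ : Finset (Fin n)).Nonempty)
    (q : Fin n → ℝ) (hq0 : ∀ i, 0 ≤ q i) (hq : ∑ i, Real.exp (-(q i)) = 1) :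
    Finset.univ.inf' hne q ≤
      ((n : ℝ) ^ 2 / 2) *
        ∑ p ∈ (Finset.univ : Finset (Fin n)).offDiag, Real.exp (-(q p.1 + q p.2)) := by
  obtain ⟨i₀, -, hi₀⟩ := Finset.exists_mem_eq_inf' hne q
  set x : Fin n → ℝ := fun i => Real.exp (-(q i)) with hx
  have hxpos : ∀ i, 0 < x i := fun i => Real.exp_pos _
  have hxle : ∀ i, x i ≤ x i₀ := by
    intro i
    apply Real.exp_le_exp.2
    apply neg_le_neg
    rw [← hi₀]
    exact Finset.inf'_le _ (Finset.mem_univ i)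
  have key : ∑ p ∈ (Finset.univ : Finset (Fin n)).offDiag, x p.1 * x p.2
      + ∑ i, x i ^ 2 = (∑ i, x i) ^ 2 := by
    rw [sq, Finset.sum_mul_sum, ← Finset.sum_product',
      ← Finset.diag_union_offDiag (Finset.univ : Finset (Fin n)),
      Finset.sum_union (Finset.disjoint_diag_offDiag _), Finset.sum_diag]
    simp [sq]
    ring
  have hterm : ∀ p : Fin n × Fin n, Real.exp (-(q p.1 + q p.2)) = x p.1 * x p.2 := by
    intro p
    rw [hx, ← Real.exp_add]
    ring_nf
  have hoff : ∑ p ∈ (Finset.univ : Finset (Fin n)).offDiag, Real.exp (-(q p.1 + q p.2))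
      = 1 - ∑ i, x i ^ 2 := by
    rw [Finset.sum_congr rfl fun p _ => hterm p]
    have := key
    rw [hq] at this
    linarith
  have hsq : ∑ i, x i ^ 2 ≤ x i₀ := by
    calc ∑ i, x i ^ 2 ≤ ∑ i, x i * x i₀ := by
          apply Finset.sum_le_sum
          intro i _
          rw [sq]
          exact mul_le_mul_of_nonneg_left (hxle i) (hxpos i).le
      _ = x i₀ := by rw [← Finset.sum_mul, hq, one_mul]
  have hx0n : (1 : ℝ) / n ≤ x i₀ := by
    have h1 : (1 : ℝ) = ∑ i, x i := hq.symm
    have h2 : ∑ i, x i ≤ n * x i₀ := by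
      calc ∑ i, x i ≤ ∑ _i : Fin n, x i₀ := Finset.sum_le_sum fun i _ => hxle i
        _ = n * x i₀ := by simp [Finset.sum_const]
    have hn0 : (0 : ℝ) < n := by positivity
    rw [div_le_iff₀ hn0]
    nlinarith
  have hexp : q i₀ * x i₀ ≤ 1 - x i₀ := by
    have h1 : q i₀ + 1 ≤ Real.exp (q i₀) := Real.add_one_le_exp _
    have h2 : x i₀ = Real.exp (-(q i₀)) := rfl
    have h3 : Real.exp (q i₀) * x i₀ = 1 := by
      rw [h2, ← Real.exp_add]; simp
    nlinarith [hxpos i₀]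
  have hmn : q i₀ / n ≤ ∑ p ∈ (Finset.univ : Finset (Fin n)).offDiag,
      Real.exp (-(q p.1 + q p.2)) := by
    rw [hoff]
    have : q i₀ * (1 / n) ≤ q i₀ * x i₀ := by
      apply mul_le_mul_of_nonneg_left hx0n (hq0 i₀)
    calc q i₀ / n = q i₀ * (1 / n) := by ring
      _ ≤ q i₀ * x i₀ := this
      _ ≤ 1 - x i₀ := hexp
      _ ≤ 1 - ∑ i, x i ^ 2 := by linarith
  rw [hi₀]
  have hn0 : (0 : ℝ) < n := by positivity
  have hn2 : (2 : ℝ) ≤ n := by exact_mod_cast hn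
  have hq0' := hq0 i₀
  calc q i₀ ≤ (n / 2) * q i₀ := by nlinarith
    _ = ((n : ℝ) ^ 2 / 2) * (q i₀ / n) := by field_simp
    _ ≤ _ := by
        apply mul_le_mul_of_nonneg_left hmn
        positivity
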